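/- Let P be a finite set of points in R^d, h ⊆ R^d a k-flat, and pr the orthogonal projection onto h. Suppose c ∈ h is a Tverberg point of depth r for pr(P) with corresponding partition pr(P_1), ..., pr(P_r) (where P_1, ..., P_r partition P). Let h⊥_c be the (d−k)-flat through c orthogonal to h. Then ch(P_i) ∩ h⊥_c ≠ ∅ for every i = 1, ..., r; that is, h⊥_c is a Tverberg (d−k)-flat of depth r for P with the same partition. -/

import Mathlib

/-- Generalized lifting lemma: if `c` is a Tverberg point of depth `r` for the
orthogonal projection of `P` onto the `k`-flat `h = c + V`, witnessed by the
projections of the parts `P i`, then the `(d-k)`-flat `c + Vᗮ` through `c`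
orthogonal to `h` meets the convex hull of every part `P i`. -/
theorem generalized_lifting_lemma (d k r : ℕ)
    (V : Submodule ℝ (EuclideanSpace ℝ (Fin d))) (hV : Module.finrank ℝ V = k)
    (c : EuclideanSpace ℝ (Fin d))
    (pr : EuclideanSpace ℝ (Fin d) → EuclideanSpace ℝ (Fin d))
    (hpr : ∀ x, pr x = c + (V.orthogonalProjectionOnto (x - c) : EuclideanSpace ℝ (Fin d)))
    (P : Finset (EuclideanSpace ℝ (Fin d)))
    (Pi : Fin r → Finset (EuclideanSpace ℝ (Fin d)))
    (hne : ∀ i, (Pi i).Nonempty)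
    (hdisj : ∀ i j, i ≠ j → Disjoint (Pi i) (Pi j))
    (hcover : ∀ p ∈ P, ∃ i, p ∈ Pi i) (hsub : ∀ i, Pi i ⊆ P)
    (hc : ∀ i, c ∈ convexHull ℝ (pr '' (Pi i : Set (EuclideanSpace ℝ (Fin d))))) :
    ∀ i, ∃ x ∈ convexHull ℝ ((Pi i : Set (EuclideanSpace ℝ (Fin d)))),
      x - c ∈ Vᗮ := by
  intro i
  classical
  let L : EuclideanSpace ℝ (Fin d) →ₗ[ℝ] EuclideanSpace ℝ (Fin d) :=
    V.subtype ∘ₗ (V.orthogonalProjectionOnto).toLinearMap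
  let A : EuclideanSpace ℝ (Fin d) →ᵃ[ℝ] EuclideanSpace ℝ (Fin d) :=
    AffineMap.mk' pr L c (by
      intro p
      simp only [hpr, L, LinearMap.coe_comp, Function.comp_apply, Submodule.coe_subtype,
        ContinuousLinearMap.coe_coe, map_sub, sub_self, map_zero, Submodule.coe_zero,
        AddSubgroupClass.coe_sub, vsub_eq_sub, vadd_eq_add, add_zero]
      abel)
  have himg : pr '' (Pi i : Set (EuclideanSpace ℝ (Fin d)))
      = A '' (Pi i : Set (EuclideanSpace ℝ (Fin d))) := rfl
  have hA : c ∈ A '' (convexHull ℝ (Pi i : Set (EuclideanSpace ℝ (Fin d)))) := by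
    rw [AffineMap.image_convexHull]
    exact himg ▸ hc i
  obtain ⟨x, hx, hAx⟩ := hA
  refine ⟨x, hx, ?_⟩
  have hpx : pr x = c := hAx
  rw [hpr] at hpx
  have h0 : ((V.orthogonalProjectionOnto (x - c) : EuclideanSpace ℝ (Fin d))) = 0 := by
    have := congrArg (fun y => y - c) hpx
    simpa using this
  have hxc : x - c = (x - c) - (V.orthogonalProjectionOnto (x - c) : EuclideanSpace ℝ (Fin d)) := by
    rw [h0]; abel
  rw [hxc]
  exact Submodule.sub_starProjection_mem_orthogonal (K := V) _
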